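/- Let T = {T_t}_{t∈ℝ} be an ergodic measurable measure-preserving flow on a standard probability Borel space (X, B, μ) which is partially rigid along a sequence t_n → ∞ with rigidity constant u ∈ (0, 1]. Then for every subsequence {t_{n_k}} of {t_n} such that the Koopman operators U_{t_{n_k}} converge in the weak operator topology on L²(X, μ), the limit operator equals u·Id + (1−u)·K for some K ∈ J(T). -/

import Mathlib

set_option linter.unusedSectionVars false
open MeasureTheory Filter Topology
open scoped ENNReal RealInnerProductSpace symmDiff
set_option maxHeartbeats 2000000

/-- The constant function `1` as an element of `L²(μ)`. -/
noncomputable def lpOne {X : Type*} [MeasurableSpace X] (μ : Measure X)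
    [IsProbabilityMeasure μ] : Lp ℝ 2 μ := Lp.const 2 μ (1 : ℝ)

/-- A Markov operator on `L²(μ)`: a bounded operator `V` with `V f ≥ 0` whenever
`f ≥ 0`, `V 1 = 1` and `V* 1 = 1`. -/
def IsMarkovOp {X : Type*} [MeasurableSpace X] (μ : Measure X) [IsProbabilityMeasure μ]
    (V : Lp ℝ 2 μ →L[ℝ] Lp ℝ 2 μ) : Prop :=
  (∀ f : Lp ℝ 2 μ, 0 ≤ f → 0 ≤ V f) ∧
  V (lpOne μ) = lpOne μ ∧
  ContinuousLinearMap.adjoint V (lpOne μ) = lpOne μ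

/-- `Φ` belongs to the closure of `S` in the weak operator topology on
bounded operators of `L²(μ)`. -/
def InWOTClosure {X : Type*} [MeasurableSpace X] (μ : Measure X)
    (S : Set (Lp ℝ 2 μ →L[ℝ] Lp ℝ 2 μ)) (Φ : Lp ℝ 2 μ →L[ℝ] Lp ℝ 2 μ) : Prop :=
  ContinuousLinearMapWOT.ofCLM (σ := RingHom.id ℝ) (E := Lp ℝ 2 μ) (F := Lp ℝ 2 μ) Φ ∈
    closure ((ContinuousLinearMapWOT.ofCLM (σ := RingHom.id ℝ) (E := Lp ℝ 2 μ) (F := Lp ℝ 2 μ)) '' S)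

/-- The flow `{T_t}` is partially rigid along the sequence `{t_n}` with rigidity
constant `u`: `liminf_n μ(A ∩ T_{-t_n} A) ≥ u · μ(A)` for every measurable `A`. -/
def PartiallyRigidAlongWith {X : Type*} [MeasurableSpace X] (μ : Measure X)
    (T : ℝ → X → X) (t : ℕ → ℝ) (u : ℝ) : Prop :=
  ∀ A : Set X, MeasurableSet A →
    ENNReal.ofReal u * μ A ≤ Filter.liminf (fun n => μ (A ∩ T (t n) ⁻¹' A)) Filter.atTop

/-- The flow `{T_t}` is partially rigid along the sequence `{t_n}`. -/
def PartiallyRigidAlong {X : Type*} [MeasurableSpace X] (μ : Measure X)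
    (T : ℝ → X → X) (t : ℕ → ℝ) : Prop :=
  ∃ u : ℝ, 0 < u ∧ u ≤ 1 ∧ PartiallyRigidAlongWith μ T t u

/-- The measure-preserving flow `{T_t}` is ergodic: every measurable set `A` which is
invariant (mod `μ`) under every `T_t` has measure `0` or `1`. -/
def ErgodicFlow {X : Type*} [MeasurableSpace X] (μ : Measure X) (T : ℝ → X → X) : Prop :=
  ∀ A : Set X, MeasurableSet A → (∀ t : ℝ, μ ((T t ⁻¹' A) ∆ A) = 0) →
    μ A = 0 ∨ μ A = 1

section Aux

variable {X : Type*} [MeasurableSpace X] {μ : Measure X} [IsProbabilityMeasure μ]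

/-- indicator of A as an element of L². -/
noncomputable def chi (μ : Measure X) [IsProbabilityMeasure μ] {A : Set X}
    (hA : MeasurableSet A) : Lp ℝ 2 μ :=
  indicatorConstLp 2 hA (measure_ne_top μ A) (1 : ℝ)

lemma chi_coeFn {A : Set X} (hA : MeasurableSet A) :
    ⇑(chi μ hA) =ᵐ[μ] A.indicator fun _ => (1:ℝ) := indicatorConstLp_coeFn

lemma chi_nonneg {A : Set X} (hA : MeasurableSet A) : 0 ≤ chi μ hA := by
  rw [← Lp.coeFn_nonneg]
  filter_upwards [chi_coeFn (μ := μ) hA] with x hx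
  rw [hx]
  exact Set.indicator_nonneg (fun _ _ => zero_le_one) x

lemma inner_L2_eq (f g : Lp ℝ 2 μ) : ⟪f, g⟫ = ∫ x, f x * g x ∂μ := by
  rw [L2.inner_def]
  simp [RCLike.inner_apply]
  exact integral_congr_ae (ae_of_all _ fun x => mul_comm _ _)

lemma inner_nonneg_L2 {f g : Lp ℝ 2 μ} (hf : 0 ≤ f) (hg : 0 ≤ g) : 0 ≤ ⟪f, g⟫ := by
  rw [inner_L2_eq]
  refine integral_nonneg_of_ae ?_
  filter_upwards [(Lp.coeFn_nonneg f).2 hf, (Lp.coeFn_nonneg g).2 hg] with x h1 h2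
  exact mul_nonneg h1 h2

lemma inner_chi_eq {A : Set X} (hA : MeasurableSet A) (f : Lp ℝ 2 μ) :
    ⟪chi μ hA, f⟫ = ∫ x in A, f x ∂μ :=
  L2.inner_indicatorConstLp_one hA (measure_ne_top μ A) f

lemma nonneg_of_inner_chi (h : Lp ℝ 2 μ)
    (hc : ∀ A : Set X, ∀ hA : MeasurableSet A, 0 ≤ ⟪chi μ hA, h⟫) : 0 ≤ h := by
  rw [← Lp.coeFn_nonneg]
  refine ae_nonneg_of_forall_setIntegral_nonneg ((Lp.memLp h).integrable one_le_two) ?_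
  intro s hs _
  rw [← inner_chi_eq hs h]
  exact hc s hs

lemma smul_nonneg_L2 {c : ℝ} (hc : 0 ≤ c) {f : Lp ℝ 2 μ} (hf : 0 ≤ f) : 0 ≤ c • f := by
  rw [← Lp.coeFn_nonneg]
  filter_upwards [Lp.coeFn_smul c f, (Lp.coeFn_nonneg f).2 hf] with x h1 h2
  rw [h1]
  exact mul_nonneg hc h2

lemma inner_chi_chi {A B : Set X} (hA : MeasurableSet A) (hB : MeasurableSet B) :
    ⟪chi μ hB, chi μ hA⟫ = (μ (B ∩ A)).toReal := by
  rw [inner_chi_eq]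
  have h1 : ∫ x in B, (chi μ hA) x ∂μ = ∫ x in B, A.indicator (fun _ => (1:ℝ)) x ∂μ :=
    setIntegral_congr_ae hB ((chi_coeFn hA).mono fun x hx _ => hx)
  rw [h1, setIntegral_indicator hA, setIntegral_const, smul_eq_mul, mul_one]
  rfl

lemma inner_mono_L2 {a a' b b' : Lp ℝ 2 μ} (ha' : 0 ≤ a') (hb' : 0 ≤ b')
    (haa : a' ≤ a) (hbb : b' ≤ b) : ⟪a', b'⟫ ≤ ⟪a, b⟫ := by
  have h1 : 0 ≤ ⟪a - a', b⟫ :=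
    inner_nonneg_L2 (sub_nonneg.2 haa) (le_trans hb' hbb)
  have h2 : 0 ≤ ⟪a', b - b'⟫ := inner_nonneg_L2 ha' (sub_nonneg.2 hbb)
  rw [inner_sub_left] at h1
  rw [inner_sub_right] at h2
  linarith

lemma chi_le_chi {A B : Set X} (hA : MeasurableSet A) (hB : MeasurableSet B)
    (hAB : A ⊆ B) : chi μ hA ≤ chi μ hB := by
  rw [← Lp.coeFn_le]
  filter_upwards [chi_coeFn (μ := μ) hA, chi_coeFn (μ := μ) hB] with x h1 h2
  rw [h1, h2]
  exact Set.indicator_le_indicator_of_subset hAB (fun _ => zero_le_one) x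

section Koopman

variable {T : ℝ → X → X} {U : ℝ → (Lp ℝ 2 μ →L[ℝ] Lp ℝ 2 μ)}

lemma U_nonneg (hTmp : ∀ t : ℝ, MeasurePreserving (T t) μ μ)
    (hU : ∀ (t : ℝ) (f : Lp ℝ 2 μ), (U t f : X → ℝ) =ᵐ[μ] fun x => (f : X → ℝ) (T t x))
    (s : ℝ) {f : Lp ℝ 2 μ} (hf : 0 ≤ f) : 0 ≤ U s f := by
  rw [← Lp.coeFn_nonneg]
  filter_upwards [hU s f,
    (hTmp s).quasiMeasurePreserving.ae ((Lp.coeFn_nonneg f).2 hf)] with x h1 h2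
  rw [h1]
  exact h2

lemma inner_U_chi (hTmp : ∀ t : ℝ, MeasurePreserving (T t) μ μ)
    (hU : ∀ (t : ℝ) (f : Lp ℝ 2 μ), (U t f : X → ℝ) =ᵐ[μ] fun x => (f : X → ℝ) (T t x))
    (s : ℝ) {A : Set X} (hA : MeasurableSet A) :
    ⟪U s (chi μ hA), chi μ hA⟫ = (μ (A ∩ T s ⁻¹' A)).toReal := by
  rw [real_inner_comm, inner_chi_eq]
  have hae : ⇑(U s (chi μ hA)) =ᵐ[μ] (T s ⁻¹' A).indicator fun _ => (1:ℝ) := by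
    filter_upwards [hU s (chi μ hA),
      (hTmp s).quasiMeasurePreserving.ae_eq (chi_coeFn (μ := μ) hA)] with x h1 h2
    rw [h1, show ⇑(chi μ hA) (T s x) = A.indicator (fun _ => (1:ℝ)) (T s x) from h2]
    by_cases hx : x ∈ T s ⁻¹' A
    · simp [Function.comp, Set.indicator_of_mem hx, Set.indicator_of_mem (Set.mem_preimage.1 hx)]
    · simp [Function.comp, Set.indicator_of_notMem hx,
        Set.indicator_of_notMem (fun h => hx (Set.mem_preimage.2 h))]
  have h1 : ∫ x in A, (U s (chi μ hA)) x ∂μ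
      = ∫ x in A, (T s ⁻¹' A).indicator (fun _ => (1:ℝ)) x ∂μ :=
    setIntegral_congr_ae hA (hae.mono fun x hx _ => hx)
  rw [h1, setIntegral_indicator (hA.preimage (hTmp s).measurable), setIntegral_const,
    smul_eq_mul, mul_one]
  rfl

lemma integral_U (hTmp : ∀ t : ℝ, MeasurePreserving (T t) μ μ)
    (hU : ∀ (t : ℝ) (f : Lp ℝ 2 μ), (U t f : X → ℝ) =ᵐ[μ] fun x => (f : X → ℝ) (T t x))
    (s : ℝ) (f : Lp ℝ 2 μ) : ∫ x, (U s f) x ∂μ = ∫ x, f x ∂μ := by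
  rw [integral_congr_ae (hU s f)]
  have : ∫ x, f x ∂μ = ∫ x, f x ∂(μ.map (T s)) := by rw [(hTmp s).map_eq]
  rw [this, integral_map (hTmp s).measurable.aemeasurable]
  rw [(hTmp s).map_eq]
  exact Lp.aestronglyMeasurable f

lemma U_one (hTmp : ∀ t : ℝ, MeasurePreserving (T t) μ μ)
    (hU : ∀ (t : ℝ) (f : Lp ℝ 2 μ), (U t f : X → ℝ) =ᵐ[μ] fun x => (f : X → ℝ) (T t x))
    (s : ℝ) : U s (Lp.const 2 μ (1:ℝ)) = Lp.const 2 μ (1:ℝ) := by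
  apply Lp.ext
  filter_upwards [hU s (Lp.const 2 μ (1:ℝ)),
    (hTmp s).quasiMeasurePreserving.ae_eq (Lp.coeFn_const (μ := μ) (p := 2) (1:ℝ)),
    Lp.coeFn_const (μ := μ) (p := 2) (1:ℝ)] with x h1 h2 h3
  rw [h1, h3]
  exact h2

lemma inner_one_L2 (f : Lp ℝ 2 μ) : ⟪Lp.const 2 μ (1:ℝ), f⟫ = ∫ x, f x ∂μ := by
  rw [inner_L2_eq]
  refine integral_congr_ae ?_
  filter_upwards [Lp.coeFn_const (μ := μ) (p := 2) (1:ℝ)] with x h1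
  rw [h1]
  simp

lemma U_comp (hTadd : ∀ s t : ℝ, ∀ x : X, T (s + t) x = T s (T t x))
    (hTmp : ∀ t : ℝ, MeasurePreserving (T t) μ μ)
    (hU : ∀ (t : ℝ) (f : Lp ℝ 2 μ), (U t f : X → ℝ) =ᵐ[μ] fun x => (f : X → ℝ) (T t x))
    (s τ : ℝ) : (U s).comp (U τ) = U (τ + s) := by
  ext f
  filter_upwards [hU s (U τ f), (hTmp s).quasiMeasurePreserving.ae_eq (hU τ f),
    hU (τ + s) f] with x h1 h2 h3
  rw [ContinuousLinearMap.comp_apply, h1,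
    show ⇑(U τ f) (T s x) = f (T τ (T s x)) from h2, h3, hTadd τ s x]

end Koopman

lemma toLp_simpleFunc_indicator {S : Set X} (hS : MeasurableSet S) (c : ℝ)
    (hmem : MemLp (⇑(SimpleFunc.piecewise S hS (SimpleFunc.const X c)
      (SimpleFunc.const X (0:ℝ)))) 2 μ) :
    hmem.toLp _ = c • chi μ hS := by
  apply Lp.ext
  filter_upwards [hmem.coeFn_toLp, Lp.coeFn_smul c (chi μ hS), chi_coeFn (μ := μ) hS] with x h1 h2 h3
  rw [h1, h2, Pi.smul_apply, h3]
  by_cases hx : x ∈ S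
  · simp [SimpleFunc.piecewise_apply, hx, Set.indicator_of_mem hx]
  · simp [SimpleFunc.piecewise_apply, hx, Set.indicator_of_notMem hx]

lemma psi_nonneg_simple (Ψ : Lp ℝ 2 μ →L[ℝ] Lp ℝ 2 μ)
    (hind : ∀ A : Set X, ∀ hA : MeasurableSet A, 0 ≤ Ψ (chi μ hA))
    (s : SimpleFunc X ℝ) (hs : ∀ x, 0 ≤ s x) :
    0 ≤ Ψ ((SimpleFunc.memLp_of_isFiniteMeasure s 2 μ).toLp s) := by
  revert hs
  refine SimpleFunc.induction (motive := fun s : SimpleFunc X ℝ => (∀ x, 0 ≤ s x) →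
    0 ≤ Ψ ((SimpleFunc.memLp_of_isFiniteMeasure s 2 μ).toLp s)) ?_ ?_ s
  · intro c S hS hs
    rw [toLp_simpleFunc_indicator hS c]
    by_cases hSe : S = ∅
    · have : chi μ hS = 0 := by
        apply Lp.ext
        filter_upwards [chi_coeFn (μ := μ) hS, Lp.coeFn_zero ℝ 2 μ] with x h1 h2
        rw [h1, h2, hSe]
        simp
      rw [this, smul_zero, map_zero]
    · obtain ⟨x, hx⟩ := Set.nonempty_iff_ne_empty.2 hSe
      have hc : 0 ≤ c := by
        have := hs x
        simpa [SimpleFunc.piecewise_apply, hx] using this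
      rw [_root_.map_smul]
      exact smul_nonneg_L2 hc (hind S hS)
  · intro f g hdisj hf hg hs
    have hf0 : ∀ x, 0 ≤ f x := by
      intro x
      by_cases hx : f x = 0
      · rw [hx]
      · have hgx : g x = 0 := by
          by_contra hgx
          exact (Set.disjoint_left.1 hdisj (Function.mem_support.2 hx))
            (Function.mem_support.2 hgx)
        have := hs x
        rwa [SimpleFunc.add_apply, hgx, add_zero] at this
    have hg0 : ∀ x, 0 ≤ g x := by
      intro x
      by_cases hx : g x = 0
      · rw [hx]
      · have hfx : f x = 0 := by
          by_contra hfx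
          exact (Set.disjoint_left.1 hdisj (Function.mem_support.2 hfx))
            (Function.mem_support.2 hx)
        have := hs x
        rwa [SimpleFunc.add_apply, hfx, zero_add] at this
    have hsum : (SimpleFunc.memLp_of_isFiniteMeasure (f + g) 2 μ).toLp ⇑(f + g)
        = (SimpleFunc.memLp_of_isFiniteMeasure f 2 μ).toLp f
          + (SimpleFunc.memLp_of_isFiniteMeasure g 2 μ).toLp g := by
      apply Lp.ext
      filter_upwards [(SimpleFunc.memLp_of_isFiniteMeasure (f + g) 2 μ).coeFn_toLp,
        (SimpleFunc.memLp_of_isFiniteMeasure f 2 μ).coeFn_toLp,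
        (SimpleFunc.memLp_of_isFiniteMeasure g 2 μ).coeFn_toLp,
        Lp.coeFn_add ((SimpleFunc.memLp_of_isFiniteMeasure f 2 μ).toLp f)
          ((SimpleFunc.memLp_of_isFiniteMeasure g 2 μ).toLp g)] with x h1 h2 h3 h4
      rw [h1, h4, Pi.add_apply, h2, h3, SimpleFunc.coe_add, Pi.add_apply]
    rw [hsum, map_add]
    exact add_nonneg (hf hf0) (hg hg0)

lemma psi_nonneg_of_indicator (Ψ : Lp ℝ 2 μ →L[ℝ] Lp ℝ 2 μ)
    (hind : ∀ A : Set X, ∀ hA : MeasurableSet A, 0 ≤ Ψ (chi μ hA))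
    (f : Lp ℝ 2 μ) (hf : 0 ≤ f) : 0 ≤ Ψ f := by
  have hmk := (Lp.memLp f).aestronglyMeasurable
  set f₀ := hmk.mk (⇑f) with hf₀
  have hmeas₀ : Measurable f₀ := hmk.stronglyMeasurable_mk.measurable
  set g : X → ℝ := fun x => max (f₀ x) 0 with hgdef
  have hgmeas : Measurable g := hmeas₀.max measurable_const
  have hfg : ⇑f =ᵐ[μ] g := by
    filter_upwards [hmk.ae_eq_mk, (Lp.coeFn_nonneg f).2 hf] with x h1 h2
    rw [hgdef, hf₀]
    simp only [← h1]
    exact (sup_eq_left.2 h2).symm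
  have hg_mem : MemLp g 2 μ := (Lp.memLp f).ae_eq hfg
  have h₀ : (0:ℝ) ∈ Set.Ici (0:ℝ) := Set.self_mem_Ici
  set s : ℕ → SimpleFunc X ℝ := fun k => SimpleFunc.approxOn g hgmeas (Set.Ici 0) 0 h₀ k with hsdef
  have hs_nonneg : ∀ k x, 0 ≤ s k x := fun k x =>
    SimpleFunc.approxOn_mem hgmeas h₀ k x
  have htend : Tendsto (fun k => eLpNorm (⇑(s k) - g) 2 μ) atTop (𝓝 0) := by
    refine SimpleFunc.tendsto_approxOn_Lp_eLpNorm hgmeas h₀ (by norm_num) ?_ ?_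
    · filter_upwards with x
      rw [closure_Ici]
      exact Set.mem_Ici.2 le_sup_right
    · simpa using hg_mem.2
  have hFf : hg_mem.toLp g = f := (Lp.ext (hg_mem.coeFn_toLp.trans hfg.symm))
  have htendLp : Tendsto (fun k => (SimpleFunc.memLp_of_isFiniteMeasure (s k) 2 μ).toLp (s k))
      atTop (𝓝 f) := by
    rw [← hFf]
    exact (Lp.tendsto_Lp_iff_tendsto_eLpNorm'' (fun k => ⇑(s k))
      (fun k => SimpleFunc.memLp_of_isFiniteMeasure (s k) 2 μ) g hg_mem).2 htend
  have htendΨ : Tendsto (fun k => Ψ ((SimpleFunc.memLp_of_isFiniteMeasure (s k) 2 μ).toLp (s k)))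
      atTop (𝓝 (Ψ f)) := (Ψ.continuous.tendsto f).comp htendLp
  exact le_of_tendsto_of_tendsto' tendsto_const_nhds htendΨ
    (fun k => psi_nonneg_simple Ψ hind (s k) (hs_nonneg k))
lemma indicatorConstLp_eq_smul_chi {S : Set X} (hS : MeasurableSet S) (hμS : μ S ≠ ∞) (c : ℝ) :
    indicatorConstLp 2 hS hμS c = c • chi μ hS := by
  apply Lp.ext
  filter_upwards [indicatorConstLp_coeFn (μ := μ) (p := 2) (hs := hS) (hμs := hμS) (c := c),
    Lp.coeFn_smul c (chi μ hS), chi_coeFn (μ := μ) hS] with x h1 h2 h3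
  rw [h1, h2, Pi.smul_apply, h3]
  by_cases hx : x ∈ S
  · simp [Set.indicator_of_mem hx]
  · simp [Set.indicator_of_notMem hx]

end Aux

/-- Remark 2.2, first part: let `T` be an ergodic measure-preserving flow
which is partially rigid along `t_n → ∞` with rigidity constant `u ∈ (0, 1]`. Then for
every subsequence `t_{n_k}` along which the Koopman operators converge in the weak
operator topology, the limit operator equals `u·Id + (1-u)·K` for some `K ∈ J(T)`. -/
theorem stmt15 {X : Type*} [MeasurableSpace X] [StandardBorelSpace X]
    (μ : Measure X) [IsProbabilityMeasure μ]
    (T : ℝ → X → X)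
    (hT0 : ∀ x : X, T 0 x = x)
    (hTadd : ∀ s t : ℝ, ∀ x : X, T (s + t) x = T s (T t x))
    (hTmeas : Measurable (Function.uncurry T))
    (hTmp : ∀ t : ℝ, MeasurePreserving (T t) μ μ)
    (U : ℝ → (Lp ℝ 2 μ →L[ℝ] Lp ℝ 2 μ))
    (hU : ∀ (t : ℝ) (f : Lp ℝ 2 μ), (U t f : X → ℝ) =ᵐ[μ] fun x => (f : X → ℝ) (T t x))
    (hUcont : ∀ f g : Lp ℝ 2 μ, Continuous fun t : ℝ => ⟪U t f, g⟫)
    (herg : ErgodicFlow μ T)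
    (t : ℕ → ℝ) (ht : Tendsto t atTop atTop)
    (u : ℝ) (hu0 : 0 < u) (hu1 : u ≤ 1)
    (hpr : PartiallyRigidAlongWith μ T t u) :
    ∀ n : ℕ → ℕ, StrictMono n → ∀ Φ : Lp ℝ 2 μ →L[ℝ] Lp ℝ 2 μ,
      Tendsto (fun k => ContinuousLinearMapWOT.ofCLM (σ := RingHom.id ℝ) (E := Lp ℝ 2 μ) (F := Lp ℝ 2 μ) (U (t (n k))))
        atTop (nhds (ContinuousLinearMapWOT.ofCLM (σ := RingHom.id ℝ) (E := Lp ℝ 2 μ) (F := Lp ℝ 2 μ) Φ)) →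
      ∃ K : Lp ℝ 2 μ →L[ℝ] Lp ℝ 2 μ, IsMarkovOp μ K ∧
        (∀ τ : ℝ, K.comp (U τ) = (U τ).comp K) ∧
        Φ = u • ContinuousLinearMap.id ℝ (Lp ℝ 2 μ) + (1 - u) • K := by
  intro n hn Φ hΦ
  -- WOT convergence gives inner-product convergence
  have hconv : ∀ f g : Lp ℝ 2 μ,
      Tendsto (fun k => ⟪U (t (n k)) f, g⟫) atTop (𝓝 ⟪Φ f, g⟫) := by
    intro f g
    have h := ContinuousLinearMapWOT.tendsto_iff_forall_dual_apply_tendsto.1 hΦ f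
      (InnerProductSpace.toDual ℝ (Lp ℝ 2 μ) g)
    simp only [ContinuousLinearMap.toWOT_apply, InnerProductSpace.toDual_apply_apply] at h
    have hc : ∀ h' : Lp ℝ 2 μ, ⟪g, h'⟫ = ⟪h', g⟫ := fun h' => real_inner_comm h' g
    simp only [hc] at h
    exact h
  have hUcongr := hU
  -- Φ fixes the constants
  have hΦone : Φ (lpOne μ) = lpOne μ := by
    refine ext_inner_right ℝ fun g => ?_
    have h1 := hconv (lpOne μ) g
    have h2 : ∀ k, ⟪U (t (n k)) (lpOne μ), g⟫ = ⟪lpOne μ, g⟫ := fun k => by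
      rw [show U (t (n k)) (lpOne μ) = lpOne μ from U_one hTmp hU (t (n k))]
    simp only [h2] at h1
    exact tendsto_nhds_unique h1 tendsto_const_nhds
  -- the adjoint of Φ fixes the constants
  have hΦaone : ContinuousLinearMap.adjoint Φ (lpOne μ) = lpOne μ := by
    refine ext_inner_right ℝ fun g => ?_
    rw [ContinuousLinearMap.adjoint_inner_left]
    have h1 : Tendsto (fun k => ⟪lpOne μ, U (t (n k)) g⟫) atTop (𝓝 ⟪lpOne μ, Φ g⟫) := by
      have := hconv g (lpOne μ)
      have hc : ∀ h' : Lp ℝ 2 μ, ⟪h', lpOne μ⟫ = ⟪lpOne μ, h'⟫ :=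
        fun h' => real_inner_comm (lpOne μ) h'
      simpa only [hc] using this
    have h2 : ∀ k, ⟪lpOne μ, U (t (n k)) g⟫ = ⟪lpOne μ, g⟫ := fun k => by
      rw [show lpOne μ = Lp.const 2 μ (1:ℝ) from rfl, inner_one_L2, inner_one_L2,
        integral_U hTmp hU]
    simp only [h2] at h1
    exact tendsto_nhds_unique h1 tendsto_const_nhds
  -- Φ is positivity preserving
  have hΦpos : ∀ f : Lp ℝ 2 μ, 0 ≤ f → 0 ≤ Φ f := by
    intro f hf
    refine nonneg_of_inner_chi _ (fun A hA => ?_)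
    rw [real_inner_comm]
    refine ge_of_tendsto' (hconv f (chi μ hA)) (fun k => ?_)
    exact inner_nonneg_L2 (U_nonneg hTmp hU _ hf) (chi_nonneg hA)
  -- partial rigidity gives the key inner-product estimate on indicators
  have h1 : ∀ A : Set X, ∀ hA : MeasurableSet A,
      u * (μ A).toReal ≤ ⟪Φ (chi μ hA), chi μ hA⟫ := by
    intro A hA
    set c : ℝ := ⟪Φ (chi μ hA), chi μ hA⟫ with hc
    have hc0 : 0 ≤ c := inner_nonneg_L2 (hΦpos _ (chi_nonneg hA)) (chi_nonneg hA)
    have hlim : Tendsto (fun k => (μ (A ∩ T (t (n k)) ⁻¹' A)).toReal) atTop (𝓝 c) := by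
      have := hconv (chi μ hA) (chi μ hA)
      have h2 : ∀ k, ⟪U (t (n k)) (chi μ hA), chi μ hA⟫
          = (μ (A ∩ T (t (n k)) ⁻¹' A)).toReal := fun k => inner_U_chi hTmp hU _ hA
      simpa only [h2] using this
    have hlimE : Tendsto (fun k => μ (A ∩ T (t (n k)) ⁻¹' A)) atTop (𝓝 (ENNReal.ofReal c)) := by
      have h3 := (ENNReal.continuous_ofReal.tendsto c).comp hlim
      refine h3.congr fun k => ?_
      exact ENNReal.ofReal_toReal (measure_ne_top μ _)
    have hliminf : ENNReal.ofReal u * μ A ≤ ENNReal.ofReal c := by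
      have hle1 : ENNReal.ofReal u * μ A
          ≤ liminf (fun j => μ (A ∩ T (t j) ⁻¹' A)) atTop := hpr A hA
      have hle2 : liminf (fun j => μ (A ∩ T (t j) ⁻¹' A)) atTop
          ≤ liminf (fun k => μ (A ∩ T (t (n k)) ⁻¹' A)) atTop := by
        have hmap : map n atTop ≤ atTop := hn.tendsto_atTop
        have := liminf_le_liminf_of_le (u := fun j => μ (A ∩ T (t j) ⁻¹' A)) hmap
        rw [← Filter.liminf_comp] at this
        exact this
      rw [hlimE.liminf_eq] at hle2
      exact le_trans hle1 hle2
    have := ENNReal.toReal_mono ENNReal.ofReal_ne_top hliminf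
    rwa [ENNReal.toReal_mul, ENNReal.toReal_ofReal hu0.le,
      ENNReal.toReal_ofReal hc0] at this
  -- hence Φ dominates u·Id on indicators
  have h5 : ∀ A : Set X, ∀ hA : MeasurableSet A, 0 ≤ Φ (chi μ hA) - u • chi μ hA := by
    intro A hA
    refine nonneg_of_inner_chi _ (fun B hB => ?_)
    rw [inner_sub_right, real_inner_smul_right]
    have hBA : MeasurableSet (B ∩ A) := hB.inter hA
    have key : ⟪chi μ hBA, Φ (chi μ hBA)⟫ ≤ ⟪chi μ hB, Φ (chi μ hA)⟫ := by
      refine inner_mono_L2 (chi_nonneg hBA) (hΦpos _ (chi_nonneg hBA))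
        (chi_le_chi hBA hB Set.inter_subset_left) ?_
      have h6 : 0 ≤ Φ (chi μ hA) - Φ (chi μ hBA) := by
        rw [← map_sub]
        exact hΦpos _ (sub_nonneg.2 (chi_le_chi hBA hA Set.inter_subset_right))
      exact sub_nonneg.1 h6
    have hrig : u * (μ (B ∩ A)).toReal ≤ ⟪chi μ hBA, Φ (chi μ hBA)⟫ := by
      rw [real_inner_comm]
      exact h1 _ hBA
    rw [inner_chi_chi hA hB]
    linarith
  -- hence Φ dominates u·Id on all nonnegative functions
  have hΨpos : ∀ f : Lp ℝ 2 μ, 0 ≤ f → 0 ≤ Φ f - u • f := by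
    have := psi_nonneg_of_indicator (μ := μ)
      (Φ - u • ContinuousLinearMap.id ℝ (Lp ℝ 2 μ)) (fun A hA => by
        simpa using h5 A hA)
    intro f hf
    simpa using this f hf
  -- Φ commutes with the Koopman operators
  have hΦcomm : ∀ τ : ℝ, Φ.comp (U τ) = (U τ).comp Φ := by
    intro τ
    refine ContinuousLinearMap.ext fun f => ?_
    refine ext_inner_right ℝ fun g => ?_
    have hA1 : Tendsto (fun k => ⟪U (t (n k)) (U τ f), g⟫) atTop (𝓝 ⟪Φ (U τ f), g⟫) :=
      hconv (U τ f) g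
    have hA2 : ∀ k, ⟪U (t (n k)) (U τ f), g⟫
        = ⟪U (t (n k)) f, ContinuousLinearMap.adjoint (U τ) g⟫ := by
      intro k
      have e1 : U (t (n k)) (U τ f) = U τ (U (t (n k)) f) := by
        have e2 := U_comp hTadd hTmp hU (t (n k)) τ
        have e3 := U_comp hTadd hTmp hU τ (t (n k))
        calc U (t (n k)) (U τ f) = ((U (t (n k))).comp (U τ)) f := rfl
          _ = U (τ + t (n k)) f := by rw [e2]
          _ = U (t (n k) + τ) f := by rw [add_comm]
          _ = ((U τ).comp (U (t (n k)))) f := by rw [e3]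
          _ = U τ (U (t (n k)) f) := rfl
      rw [e1, ← ContinuousLinearMap.adjoint_inner_right]
    have hA3 : Tendsto (fun k => ⟪U (t (n k)) f, ContinuousLinearMap.adjoint (U τ) g⟫)
        atTop (𝓝 ⟪Φ f, ContinuousLinearMap.adjoint (U τ) g⟫) := hconv f _
    simp only [hA2] at hA1
    have := tendsto_nhds_unique hA1 hA3
    rw [ContinuousLinearMap.comp_apply, ContinuousLinearMap.comp_apply, this,
      ContinuousLinearMap.adjoint_inner_right]
  by_cases hueq : u = 1
  · -- full rigidity: Φ = Id
    subst hueq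
    have hchi : ∀ A : Set X, ∀ hA : MeasurableSet A, Φ (chi μ hA) = chi μ hA := by
      intro A hA
      have ha : 0 ≤ Φ (chi μ hA) - (1:ℝ) • chi μ hA := h5 A hA
      rw [one_smul] at ha
      have honec : 0 ≤ lpOne μ - chi μ hA := by
        rw [← Lp.coeFn_nonneg]
        filter_upwards [Lp.coeFn_sub (lpOne μ) (chi μ hA),
          Lp.coeFn_const (μ := μ) (p := 2) (1:ℝ), chi_coeFn (μ := μ) hA] with x e1 e2 e3
        rw [e1, Pi.sub_apply,
          show ⇑(lpOne μ) x = (1:ℝ) from e2, e3]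
        show (0:ℝ) ≤ 1 - A.indicator (fun _ => (1:ℝ)) x
        by_cases hx : x ∈ A
        · simp [Set.indicator_of_mem hx]
        · simp [Set.indicator_of_notMem hx]
      have hb : 0 ≤ Φ (lpOne μ - chi μ hA) - (1:ℝ) • (lpOne μ - chi μ hA) :=
        hΨpos _ honec
      rw [one_smul, map_sub, hΦone] at hb
      have hb' : Φ (chi μ hA) - chi μ hA ≤ 0 := by
        have habel : (lpOne μ - Φ (chi μ hA)) - (lpOne μ - chi μ hA)
            = -(Φ (chi μ hA) - chi μ hA) := by abel
        rw [habel] at hb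
        exact neg_nonneg.1 hb
      have := le_antisymm hb' ha
      rw [sub_eq_zero] at this
      exact this
    have hid : Φ = ContinuousLinearMap.id ℝ (Lp ℝ 2 μ) := by
      refine ContinuousLinearMap.ext ?_
      refine Lp.induction (by norm_num : (2:ℝ≥0∞) ≠ ∞) (fun f => Φ f = f) ?_ ?_ ?_
      · intro c S hS hμS
        rw [Lp.simpleFunc.coe_indicatorConst,
          indicatorConstLp_eq_smul_chi hS hμS.ne c, _root_.map_smul, hchi S hS]
      · intro f g hf hg _ hPf hPg
        rw [map_add, hPf, hPg]
      · exact isClosed_eq Φ.continuous continuous_id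
    refine ⟨ContinuousLinearMap.id ℝ (Lp ℝ 2 μ),
      ⟨fun f hf => hf, rfl, ?_⟩, fun τ => by simp, ?_⟩
    · refine ext_inner_right ℝ fun g => ?_
      rw [ContinuousLinearMap.adjoint_inner_left]
      rfl
    · rw [hid, sub_self, zero_smul, add_zero, one_smul]
  · -- partial rigidity: extract the Markov part
    have h1u : (0:ℝ) < 1 - u := by
      have := lt_of_le_of_ne hu1 hueq
      linarith
    set K : Lp ℝ 2 μ →L[ℝ] Lp ℝ 2 μ :=
      (1-u)⁻¹ • (Φ - u • ContinuousLinearMap.id ℝ (Lp ℝ 2 μ)) with hK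
    have hKapp : ∀ f : Lp ℝ 2 μ, K f = (1-u)⁻¹ • (Φ f - u • f) := by
      intro f
      rw [hK]
      simp [ContinuousLinearMap.smul_apply, ContinuousLinearMap.sub_apply]
    refine ⟨K, ⟨?_, ?_, ?_⟩, ?_, ?_⟩
    · intro f hf
      rw [hKapp f]
      exact smul_nonneg_L2 (inv_nonneg.2 h1u.le) (hΨpos f hf)
    · rw [hKapp, hΦone]
      have : lpOne μ - u • lpOne μ = (1-u) • lpOne μ := by
        rw [sub_smul, one_smul]
      rw [this, smul_smul, inv_mul_cancel₀ h1u.ne', one_smul]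
    · refine ext_inner_right ℝ fun g => ?_
      rw [ContinuousLinearMap.adjoint_inner_left, hKapp, inner_smul_right, inner_sub_right,
        real_inner_smul_right]
      have hone : ⟪lpOne μ, Φ g⟫ = ⟪lpOne μ, g⟫ := by
        rw [← ContinuousLinearMap.adjoint_inner_left, hΦaone]
      rw [hone]
      field_simp
    · intro τ
      rw [hK, ContinuousLinearMap.smul_comp, ContinuousLinearMap.comp_smul,
        ContinuousLinearMap.sub_comp, ContinuousLinearMap.comp_sub,
        ContinuousLinearMap.smul_comp, ContinuousLinearMap.comp_smul,
        ContinuousLinearMap.id_comp, ContinuousLinearMap.comp_id, hΦcomm τ]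
    · rw [hK, smul_smul, mul_inv_cancel₀ h1u.ne', one_smul, add_comm, sub_add_cancel]
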